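/- Under switching all chords of L (crossing change at every real chord), the writhe polynomial satisfies W_{\overline{L}}(t) = Σᵢ (− t^{span_{Kᵢ}} Wᵢ(t^{-1})). -/

import Mathlib

open Finset LaurentPolynomial

/-- switching all chords of `L` gives
`W_{L̄}(t) = Σᵢ (− t^{span_{Kᵢ}} Wᵢ(t⁻¹))`.  In `L̄` each self-chord `c` of `Kᵢ` has
`ω̄ c = -ω c`, `Ind̄ c = -Ind c`, and `Ind'̄ c = span_{Kᵢ} - Ind' c`.  Here
`Wᵢ(t) = ∑_{c self-chord of Kᵢ, Ind c ≠ 0} ω c • t^{Ind' c}`, so the right-hand side is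
`-∑_{c self, Ind c ≠ 0} ω c • t^{span(comp c) - Ind' c}`. -/
theorem writhe_switch_all {C ι : Type} [Fintype C] [DecidableEq C]
    (isSelf : C → Prop) [DecidablePred isSelf] (comp : C → ι) (span : ι → ℤ)
    (ω Ind Ind' ωbar Indbar Ind'bar : C → ℤ)
    (hbar : ∀ c : C, isSelf c → ωbar c = - ω c ∧ Indbar c = - Ind c ∧
      Ind'bar c = span (comp c) - Ind' c) :
    (∑ c ∈ univ.filter (fun c => isSelf c ∧ Indbar c ≠ 0),
        ωbar c • T (Ind'bar c) : LaurentPolynomial ℤ) =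
      - ∑ c ∈ univ.filter (fun c => isSelf c ∧ Ind c ≠ 0),
          ω c • T (span (comp c) - Ind' c) := by
  rw [← Finset.sum_neg_distrib]
  apply Finset.sum_congr
  · apply Finset.filter_congr
    intro c _
    constructor
    · rintro ⟨hs, h⟩
      refine ⟨hs, fun h0 => h ?_⟩
      rw [(hbar c hs).2.1, h0, neg_zero]
    · rintro ⟨hs, h⟩
      refine ⟨hs, fun h0 => h ?_⟩
      rw [(hbar c hs).2.1] at h0
      omega
  · intro c hc
    simp only [Finset.mem_filter] at hc
    obtain ⟨h1, h2, h3⟩ := hbar c hc.2.1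
    rw [h1, h3, neg_smul]
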